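/- (Factorization of vacuum expectation across left and right creation sums on Fock space.) Let H = H₁ ⊕ H₂ be an orthogonal decomposition of a Hilbert space, and on the full Fock space T(H) let A be any polynomial in operators {l(g), l*(g) : g ∈ H₁} and B any polynomial in {r(h), r*(h) : h ∈ H₂}. Then ω(AB) = ω(A)·ω(B), where ω is the vacuum state. -/
import Mathlib


local notation "⟪" x ", " y "⟫" => @inner ℂ _ _ x y

/-- **Example 6.3 / Proposition 2.16 a) on the Fock space** (Voiculescu, Free
Probability for Pairs of Faces I).  Let `H = H₁ ⊕ H₂` be an orthogonal
decomposition of a Hilbert space.  On the full Fock space `T(H)`, for any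
polynomial `A` in the left creation/annihilation operators `{l(g), l*(g) : g ∈ H₁}`
and any polynomial `B` in the right creation/annihilation operators
`{r(h), r*(h) : h ∈ H₂}`, the vacuum expectation factorizes:
`ω(AB) = ω(A) ω(B)`.

The Fock space is encoded by the elementary-tensor map `e` (with `Ω = e 0` the
vacuum), dense total span and tensor inner products; `l(g)` prepends, `r(h)`
appends, and `ls = l*`, `rs = r*` are the adjoints. -/
theorem fock_vacuum_expectation_factorizes
    {H F : Type*}
    [NormedAddCommGroup H] [InnerProductSpace ℂ H]
    [NormedAddCommGroup F] [InnerProductSpace ℂ F] [CompleteSpace F]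
    (H₁ H₂ : Submodule ℂ H)
    (horthHH : ∀ g ∈ H₁, ∀ h ∈ H₂, ⟪g, h⟫ = 0) (hsup : H₁ ⊔ H₂ = ⊤)
    (e : (n : ℕ) → (Fin n → H) → F)
    (hinner : ∀ (n : ℕ) (v w : Fin n → H), ⟪e n v, e n w⟫ = ∏ i, ⟪v i, w i⟫)
    (horth : ∀ m n : ℕ, m ≠ n → ∀ (v : Fin m → H) (w : Fin n → H), ⟪e m v, e n w⟫ = 0)
    (hdense : Dense (Submodule.span ℂ {x : F | ∃ n v, e n v = x} : Set F))
    (l r ls rs : H → F →L[ℂ] F)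
    (hl : ∀ (g : H) (n) (v : Fin n → H), l g (e n v) = e (n + 1) (Fin.cons g v))
    (hr : ∀ (h : H) (n) (v : Fin n → H), r h (e n v) = e (n + 1) (Fin.snoc v h))
    (hls : ∀ g u w, ⟪ls g u, w⟫ = ⟪u, l g w⟫)
    (hrs : ∀ h u w, ⟪rs h u, w⟫ = ⟪u, r h w⟫)
    (A B : F →L[ℂ] F)
    (hA : A ∈ Algebra.adjoin ℂ
      ({T | ∃ g ∈ H₁, T = l g} ∪ {T | ∃ g ∈ H₁, T = ls g} : Set (F →L[ℂ] F)))
    (hB : B ∈ Algebra.adjoin ℂ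
      ({T | ∃ h ∈ H₂, T = r h} ∪ {T | ∃ h ∈ H₂, T = rs h} : Set (F →L[ℂ] F))) :
    ⟪(A * B) (e 0 Fin.elim0), e 0 Fin.elim0⟫ =
      ⟪A (e 0 Fin.elim0), e 0 Fin.elim0⟫ * ⟪B (e 0 Fin.elim0), e 0 Fin.elim0⟫ := by
  classical
  have hΩ0 : ∀ v : Fin 0 → H, e 0 v = e 0 Fin.elim0 := fun v => by
    rw [Subsingleton.elim v Fin.elim0]
  have hΩΩ : ⟪e 0 Fin.elim0, e 0 Fin.elim0⟫ = 1 := by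
    simpa using hinner 0 Fin.elim0 Fin.elim0
  -- extensionality from density
  have hext : ∀ d : F, (∀ (n : ℕ) (w : Fin n → H), ⟪d, e n w⟫ = 0) → d = 0 := by
    intro d hd
    have hsp : Set.EqOn (⇑(innerSL ℂ d)) (fun _ => (0 : ℂ))
        (Submodule.span ℂ {x : F | ∃ n v, e n v = x} : Set F) := by
      intro x hx
      induction hx using Submodule.span_induction with
      | mem x hx => obtain ⟨n, v, rfl⟩ := hx; exact hd n v
      | zero => simp
      | add x y _ _ h1 h2 => simp only [map_add, h1, h2]; simp
      | smul c x _ h1 => simp only [map_smul, h1]; simp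
    have heq := Continuous.ext_on hdense (innerSL ℂ d).continuous continuous_const hsp
    have hdd : ⟪d, d⟫ = 0 := congrFun heq d
    exact inner_self_eq_zero.mp hdd
  -- annihilation operators on elementary tensors
  have hls0 : ∀ (g : H) (v : Fin 0 → H), ls g (e 0 v) = 0 := by
    intro g v
    apply hext
    intro m w
    rw [hls, hl]
    exact horth 0 (m + 1) (by omega) _ _
  have hls1 : ∀ (g : H) (n) (v : Fin (n + 1) → H),
      ls g (e (n + 1) v) = ⟪g, v 0⟫ • e n (Fin.tail v) := by
    intro g n v
    have hz : ls g (e (n + 1) v) - ⟪g, v 0⟫ • e n (Fin.tail v) = 0 := by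
      apply hext
      intro m w
      rw [inner_sub_left, hls, hl, inner_smul_left]
      rcases eq_or_ne m n with rfl | hmn
      · rw [hinner, hinner, Fin.prod_univ_succ]
        simp only [Fin.cons_zero, Fin.cons_succ, Fin.tail, inner_conj_symm]
        ring
      · rw [horth (n + 1) (m + 1) (by omega), horth n m (Ne.symm hmn)]
        ring
    exact sub_eq_zero.mp hz
  have hrs0 : ∀ (h : H) (v : Fin 0 → H), rs h (e 0 v) = 0 := by
    intro h v
    apply hext
    intro m w
    rw [hrs, hr]
    exact horth 0 (m + 1) (by omega) _ _
  have hrs1 : ∀ (h : H) (n) (v : Fin (n + 1) → H),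
      rs h (e (n + 1) v) = ⟪h, v (Fin.last n)⟫ • e n (Fin.init v) := by
    intro h n v
    have hz : rs h (e (n + 1) v) - ⟪h, v (Fin.last n)⟫ • e n (Fin.init v) = 0 := by
      apply hext
      intro m w
      rw [inner_sub_left, hrs, hr, inner_smul_left]
      rcases eq_or_ne m n with rfl | hmn
      · rw [hinner, hinner, Fin.prod_univ_castSucc]
        simp only [Fin.snoc_castSucc, Fin.snoc_last, Fin.init, inner_conj_symm]
        ring
      · rw [horth (n + 1) (m + 1) (by omega), horth n m (Ne.symm hmn)]
        ring
    exact sub_eq_zero.mp hz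
  -- adjoints
  have hstar_l : ∀ g : H, star (l g) = ls g := by
    intro g
    rw [ContinuousLinearMap.star_eq_adjoint]
    ext u
    apply ext_inner_right ℂ
    intro w
    rw [ContinuousLinearMap.adjoint_inner_left, hls]
  have hstar_ls : ∀ g : H, star (ls g) = l g := by
    intro g
    rw [← hstar_l g, star_star]
  have hstar_r : ∀ h : H, star (r h) = rs h := by
    intro h
    rw [ContinuousLinearMap.star_eq_adjoint]
    ext u
    apply ext_inner_right ℂ
    intro w
    rw [ContinuousLinearMap.adjoint_inner_left, hrs]
  -- the adjoint of A lies in the same algebra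
  have hAstar : star A ∈ Algebra.adjoin ℂ
      ({T | ∃ g ∈ H₁, T = l g} ∪ {T | ∃ g ∈ H₁, T = ls g} : Set (F →L[ℂ] F)) := by
    induction hA using Algebra.adjoin_induction with
    | mem T hT =>
      rcases hT with ⟨g, hg, rfl⟩ | ⟨g, hg, rfl⟩
      · rw [hstar_l]; exact Algebra.subset_adjoin (Or.inr ⟨g, hg, rfl⟩)
      · rw [hstar_ls]; exact Algebra.subset_adjoin (Or.inl ⟨g, hg, rfl⟩)
    | algebraMap c =>
      have : star ((algebraMap ℂ (F →L[ℂ] F)) c)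
          = (algebraMap ℂ (F →L[ℂ] F)) (starRingEnd ℂ c) := by
        simp [Algebra.algebraMap_eq_smul_one, star_smul]
      rw [this]; exact Subalgebra.algebraMap_mem _ _
    | add x y _ _ h1 h2 => rw [star_add]; exact add_mem h1 h2
    | mul x y _ _ h1 h2 => rw [star_mul]; exact mul_mem h2 h1
  -- invariant subspaces
  set G₁ : Set F :=
    {x | ∃ n, ∃ v : Fin (n + 1) → H, (∀ i, v i ∈ H₁) ∧ e (n + 1) v = x} with hG₁
  set G₂ : Set F :=
    {x | ∃ n, ∃ v : Fin (n + 1) → H, (∀ i, v i ∈ H₂) ∧ e (n + 1) v = x} with hG₂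
  set Ω : F := e 0 Fin.elim0 with hΩ
  -- left operators preserve span (insert Ω G₁)
  have hinvA : ∀ T ∈ Algebra.adjoin ℂ
      ({T | ∃ g ∈ H₁, T = l g} ∪ {T | ∃ g ∈ H₁, T = ls g} : Set (F →L[ℂ] F)),
      ∀ x ∈ Submodule.span ℂ (insert Ω G₁), T x ∈ Submodule.span ℂ (insert Ω G₁) := by
    intro T hT
    induction hT using Algebra.adjoin_induction with
    | mem T hT =>
      intro x hx
      induction hx using Submodule.span_induction with
      | mem x hxm =>
        rcases hT with ⟨g, hg, rfl⟩ | ⟨g, hg, rfl⟩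
        · rcases hxm with rfl | hxm
          · rw [hΩ, hl]
            refine Submodule.subset_span (Or.inr ⟨0, Fin.cons g Fin.elim0, ?_, rfl⟩)
            intro i
            refine Fin.cases ?_ (fun j => j.elim0) i
            simpa using hg
          · obtain ⟨n, v, hv, rfl⟩ := hxm
            rw [hl]
            refine Submodule.subset_span (Or.inr ⟨n + 1, Fin.cons g v, ?_, rfl⟩)
            intro i
            refine Fin.cases ?_ (fun j => ?_) i
            · simpa using hg
            · simpa using hv j
        · rcases hxm with rfl | hxm
          · rw [hΩ, hls0]; exact Submodule.zero_mem _
          · obtain ⟨n, v, hv, rfl⟩ := hxm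
            rw [hls1]
            cases n with
            | zero =>
              refine Submodule.smul_mem _ _ (Submodule.subset_span (Or.inl ?_))
              rw [hΩ0 (Fin.tail v), hΩ]
            | succ m =>
              refine Submodule.smul_mem _ _ (Submodule.subset_span (Or.inr ?_))
              exact ⟨m, Fin.tail v, fun i => hv i.succ, rfl⟩
      | zero => rw [map_zero]; exact Submodule.zero_mem _
      | add x y _ _ h1 h2 => rw [map_add]; exact Submodule.add_mem _ h1 h2
      | smul c x _ h1 => rw [map_smul]; exact Submodule.smul_mem _ _ h1
    | algebraMap c =>
      intro x hx
      rw [Algebra.algebraMap_eq_smul_one]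
      simpa using Submodule.smul_mem _ c hx
    | add T S h1 h2 hT hS =>
      intro x hx
      rw [ContinuousLinearMap.add_apply]
      exact Submodule.add_mem _ (hT x hx) (hS x hx)
    | mul T S h1 h2 hT hS =>
      intro x hx
      rw [ContinuousLinearMap.mul_apply]
      exact hT _ (hS x hx)
  -- right operators preserve span (insert Ω G₂)
  have hinvB : ∀ T ∈ Algebra.adjoin ℂ
      ({T | ∃ h ∈ H₂, T = r h} ∪ {T | ∃ h ∈ H₂, T = rs h} : Set (F →L[ℂ] F)),
      ∀ x ∈ Submodule.span ℂ (insert Ω G₂), T x ∈ Submodule.span ℂ (insert Ω G₂) := by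
    intro T hT
    induction hT using Algebra.adjoin_induction with
    | mem T hT =>
      intro x hx
      induction hx using Submodule.span_induction with
      | mem x hxm =>
        rcases hT with ⟨h, hh, rfl⟩ | ⟨h, hh, rfl⟩
        · rcases hxm with rfl | hxm
          · rw [hΩ, hr]
            refine Submodule.subset_span (Or.inr ⟨0, Fin.snoc Fin.elim0 h, ?_, rfl⟩)
            intro i
            rw [Fin.eq_zero i]
            have h0 : (0 : Fin 1) = Fin.last 0 := rfl
            rw [h0, Fin.snoc_last]
            exact hh
          · obtain ⟨n, v, hv, rfl⟩ := hxm
            rw [hr]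
            refine Submodule.subset_span (Or.inr ⟨n + 1, Fin.snoc v h, ?_, rfl⟩)
            intro i
            refine Fin.lastCases ?_ (fun j => ?_) i
            · rw [Fin.snoc_last]; exact hh
            · rw [Fin.snoc_castSucc]; exact hv j
        · rcases hxm with rfl | hxm
          · rw [hΩ, hrs0]; exact Submodule.zero_mem _
          · obtain ⟨n, v, hv, rfl⟩ := hxm
            rw [hrs1]
            cases n with
            | zero =>
              refine Submodule.smul_mem _ _ (Submodule.subset_span (Or.inl ?_))
              rw [hΩ0 (Fin.init v), hΩ]
            | succ m =>
              refine Submodule.smul_mem _ _ (Submodule.subset_span (Or.inr ?_))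
              exact ⟨m, Fin.init v, fun i => hv i.castSucc, rfl⟩
      | zero => rw [map_zero]; exact Submodule.zero_mem _
      | add x y _ _ h1 h2 => rw [map_add]; exact Submodule.add_mem _ h1 h2
      | smul c x _ h1 => rw [map_smul]; exact Submodule.smul_mem _ _ h1
    | algebraMap c =>
      intro x hx
      rw [Algebra.algebraMap_eq_smul_one]
      simpa using Submodule.smul_mem _ c hx
    | add T S h1 h2 hT hS =>
      intro x hx
      rw [ContinuousLinearMap.add_apply]
      exact Submodule.add_mem _ (hT x hx) (hS x hx)
    | mul T S h1 h2 hT hS =>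
      intro x hx
      rw [ContinuousLinearMap.mul_apply]
      exact hT _ (hS x hx)
  -- orthogonality facts
  have hΩG₁ : ∀ η ∈ Submodule.span ℂ G₁, ⟪Ω, η⟫ = 0 := by
    intro η hη
    induction hη using Submodule.span_induction with
    | mem x hx =>
      obtain ⟨n, v, hv, rfl⟩ := hx
      exact horth 0 (n + 1) (by omega) _ _
    | zero => simp
    | add x y _ _ h1 h2 => rw [inner_add_right, h1, h2]; ring
    | smul c x _ h1 => rw [inner_smul_right, h1]; ring
  have hΩG₂ : ∀ ξ ∈ Submodule.span ℂ G₂, ⟪Ω, ξ⟫ = 0 := by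
    intro ξ hξ
    induction hξ using Submodule.span_induction with
    | mem x hx =>
      obtain ⟨n, v, hv, rfl⟩ := hx
      exact horth 0 (n + 1) (by omega) _ _
    | zero => simp
    | add x y _ _ h1 h2 => rw [inner_add_right, h1, h2]; ring
    | smul c x _ h1 => rw [inner_smul_right, h1]; ring
  have hG₂G₁ : ∀ ξ ∈ Submodule.span ℂ G₂, ∀ η ∈ Submodule.span ℂ G₁, ⟪ξ, η⟫ = 0 := by
    intro ξ hξ
    induction hξ using Submodule.span_induction with
    | mem x hx =>
      intro η hη
      induction hη using Submodule.span_induction with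
      | mem y hy =>
        obtain ⟨m, w, hw, rfl⟩ := hx
        obtain ⟨n, v, hv, rfl⟩ := hy
        rcases eq_or_ne m n with rfl | hmn
        · rw [hinner]
          refine Finset.prod_eq_zero (Finset.mem_univ 0) ?_
          rw [← inner_conj_symm]
          rw [horthHH (v 0) (hv 0) (w 0) (hw 0)]
          simp
        · exact horth (m + 1) (n + 1) (by omega) _ _
      | zero => simp
      | add y z _ _ h1 h2 => rw [inner_add_right, h1, h2]; ring
      | smul c y _ h1 => rw [inner_smul_right, h1]; ring
    | zero => intro η hη; simp
    | add x y _ _ h1 h2 =>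
      intro η hη
      rw [inner_add_left, h1 η hη, h2 η hη]; ring
    | smul c x _ h1 =>
      intro η hη
      rw [inner_smul_left, h1 η hη]; ring
  -- decompose (star A) Ω and B Ω
  have hΩmem₁ : Ω ∈ Submodule.span ℂ (insert Ω G₁) :=
    Submodule.subset_span (Set.mem_insert _ _)
  have hΩmem₂ : Ω ∈ Submodule.span ℂ (insert Ω G₂) :=
    Submodule.subset_span (Set.mem_insert _ _)
  obtain ⟨a, η, hη, hAeq⟩ :=
    Submodule.mem_span_insert.mp (hinvA (star A) hAstar Ω hΩmem₁)
  obtain ⟨b, ξ, hξ, hBeq⟩ :=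
    Submodule.mem_span_insert.mp (hinvB B hB Ω hΩmem₂)
  -- compute the two vacuum expectations
  have hξΩ : ⟪ξ, Ω⟫ = 0 := by
    rw [← inner_conj_symm, hΩG₂ ξ hξ]; simp
  have hωA : ⟪A Ω, Ω⟫ = a := by
    rw [← ContinuousLinearMap.adjoint_inner_right, ← ContinuousLinearMap.star_eq_adjoint,
      hAeq, inner_add_right, inner_smul_right, hΩG₁ η hη, hΩΩ]
    ring
  have hωB : ⟪B Ω, Ω⟫ = (starRingEnd ℂ) b := by
    rw [hBeq, inner_add_left, inner_smul_left, hΩΩ, hξΩ]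
    ring
  have hmain : ⟪A (B Ω), Ω⟫ = (starRingEnd ℂ) b * a := by
    rw [← ContinuousLinearMap.adjoint_inner_right, ← ContinuousLinearMap.star_eq_adjoint,
      hAeq, hBeq, inner_add_left, inner_add_right, inner_add_right,
      inner_smul_left, inner_smul_right, inner_smul_right, inner_smul_left]
    rw [hΩΩ, hΩG₁ η hη, hξΩ, hG₂G₁ ξ hξ η hη]
    ring
  calc ⟪(A * B) Ω, Ω⟫ = ⟪A (B Ω), Ω⟫ := by rw [ContinuousLinearMap.mul_apply]
    _ = (starRingEnd ℂ) b * a := hmain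
    _ = ⟪A Ω, Ω⟫ * ⟪B Ω, Ω⟫ := by rw [hωA, hωB]; ring
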